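/- Let {Y_n}_{n≥1} be independent, non-negative real random variables, and set 𝔖 := Σ_{n=1}^∞ Y_n and M_k := Σ_{n=1}^∞ E[Y_n^k] for k > 0. Define constants λ_{2,1} := 1, λ_{q,0} := 2^{q−2} for integers q ≥ 2, and λ_{q+1,h} := 2^{q−1} λ_{q,h−1} for h = 1, …, q. Then for every integer q ≥ 2, E[𝔖^q] ≤ λ_{q,q−1} M_1^q + Σ_{k=0}^{q−2} λ_{q,k} M_{q−k} M_1^k. -/

import Mathlib

open MeasureTheory ProbabilityTheory Filter
open scoped ENNReal NNReal

noncomputable section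

/-- The constants `λ_{q,h}` of the moment inequality: `λ_{2,1} = 1`,
`λ_{q,0} = 2^{q-2}` and `λ_{q+1,h} = 2^{q-1} λ_{q,h-1}` for `h = 1, …, q`. -/
noncomputable def lamST : ℕ → ℕ → ℝ
  | q, 0 => 2 ^ (q - 2)
  | q + 1, h + 1 => 2 ^ (q - 1) * lamST q h
  | 0, _ + 1 => 0

lemma lamST_zero (q : ℕ) : lamST q 0 = 2 ^ (q - 2) := by cases q <;> rfl

lemma lamST_succ_succ (q h : ℕ) : lamST (q + 1) (h + 1) = 2 ^ (q - 1) * lamST q h := rfl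

lemma lamST_nonneg : ∀ q h, 0 ≤ lamST q h
  | q, 0 => by rw [lamST_zero]; positivity
  | q + 1, h + 1 => by
      rw [lamST_succ_succ]
      exact mul_nonneg (by positivity) (lamST_nonneg q h)
  | 0, _ + 1 => le_refl 0

lemma ennreal_add_pow_le (a b : ℝ≥0∞) (n : ℕ) :
    (a + b) ^ n ≤ 2 ^ (n - 1) * (a ^ n + b ^ n) := by
  match n with
  | 0 => simpa using one_le_two
  | m + 1 =>
    rcases eq_or_ne a ∞ with rfl | ha
    · have : (∞ : ℝ≥0∞) ^ (m + 1) = ∞ := by simp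
      rw [this]
      simp [ENNReal.mul_top, pow_ne_zero m (two_ne_zero (α := ℝ≥0∞))]
    rcases eq_or_ne b ∞ with rfl | hb
    · have : (∞ : ℝ≥0∞) ^ (m + 1) = ∞ := by simp
      rw [this]
      simp [ENNReal.mul_top, pow_ne_zero m (two_ne_zero (α := ℝ≥0∞))]
    lift a to ℝ≥0 using ha
    lift b to ℝ≥0 using hb
    have h := add_pow_le (show (0:ℝ≥0) ≤ a by positivity) (show (0:ℝ≥0) ≤ b by positivity) (m + 1)
    have := (ENNReal.coe_le_coe).2 h
    push_cast at this
    convert this using 2 <;> norm_num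

/-- Key recursion step: `E[S^{p+1}] ≤ 2^{p-1} (M_{p+1} + M_1 E[S^p])`. -/
lemma key_step {Ω : Type*} [MeasurableSpace Ω] (P : Measure Ω) [IsProbabilityMeasure P]
    (Y : ℕ → Ω → ℝ) (hmeas : ∀ n, Measurable (Y n)) (hpos : ∀ n ω, 0 ≤ Y n ω)
    (hindep : iIndepFun Y P) (p : ℕ) :
    ∫⁻ ω, (∑' n, ENNReal.ofReal (Y n ω)) ^ (p + 1) ∂P
      ≤ 2 ^ (p - 1) * (∑' n, ∫⁻ ω, ENNReal.ofReal (Y n ω) ^ (p + 1) ∂P)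
        + 2 ^ (p - 1) * (∑' n, ∫⁻ ω, ENNReal.ofReal (Y n ω) ∂P)
            * ∫⁻ ω, (∑' n, ENNReal.ofReal (Y n ω)) ^ p ∂P := by
  set Z : ℕ → Ω → ℝ≥0∞ := fun n ω => ENNReal.ofReal (Y n ω) with hZdef
  have hZ : ∀ n, Measurable (Z n) := fun n => ENNReal.measurable_ofReal.comp (hmeas n)
  set S : ℕ → Ω → ℝ≥0∞ := fun N ω => ∑ n ∈ Finset.range N, Z n ω with hSdef
  have hSmeas : ∀ N, Measurable (S N) :=
    fun N => Finset.measurable_sum _ (fun n _ => hZ n)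
  -- monotone convergence: reduce to finite sums
  have hrw : ∀ q : ℕ, ∫⁻ ω, (∑' n, Z n ω) ^ q ∂P = ⨆ N, ∫⁻ ω, (S N ω) ^ q ∂P := by
    intro q
    rw [← lintegral_iSup (fun N => (hSmeas N).pow_const q)
        (fun N N' hNN' ω => pow_le_pow_left'
          (Finset.sum_le_sum_of_subset (Finset.range_subset_range.2 hNN')) q)]
    refine lintegral_congr fun ω => ?_
    refine (iSup_eq_of_tendsto ?_ ?_).symm
    · exact fun N N' hNN' => pow_le_pow_left'
        (Finset.sum_le_sum_of_subset (Finset.range_subset_range.2 hNN')) q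
    · exact (((ENNReal.continuous_pow q).tendsto _).comp
        (ENNReal.tendsto_nat_tsum (fun n => Z n ω)))
  rw [hrw (p + 1)]
  refine iSup_le fun N => ?_
  -- per-N bound
  have hNbound : ∀ n ∈ Finset.range N,
      ∫⁻ ω, Z n ω * (S N ω) ^ p ∂P
        ≤ 2 ^ (p - 1) * ((∫⁻ ω, Z n ω ^ (p + 1) ∂P)
            + (∫⁻ ω, Z n ω ∂P) * ∫⁻ ω, (∑' m, Z m ω) ^ p ∂P) := by
    intro n hn
    set T : Ω → ℝ≥0∞ := fun ω => ∑ m ∈ (Finset.range N).erase n, Z m ω with hTdef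
    have hTmeas : Measurable T := Finset.measurable_sum _ (fun m _ => hZ m)
    have hsplit : ∀ ω, S N ω = Z n ω + T ω :=
      fun ω => (Finset.add_sum_erase _ _ hn).symm
    have hpt : ∀ ω, Z n ω * (S N ω) ^ p
        ≤ 2 ^ (p - 1) * (Z n ω ^ (p + 1) + Z n ω * T ω ^ p) := by
      intro ω
      rw [hsplit ω]
      calc Z n ω * (Z n ω + T ω) ^ p
          ≤ Z n ω * (2 ^ (p - 1) * (Z n ω ^ p + T ω ^ p)) :=
            mul_le_mul_right (ennreal_add_pow_le _ _ p) _
        _ = 2 ^ (p - 1) * (Z n ω ^ (p + 1) + Z n ω * T ω ^ p) := by ring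
    -- independence
    have hindR : IndepFun (∑ m ∈ (Finset.range N).erase n, Y m) (Y n) P :=
      hindep.indepFun_finsetSum_of_notMem hmeas (Finset.notMem_erase n _)
    have hind2 : IndepFun (fun ω => (T ω) ^ p) (Z n) P := by
      have h := hindR.comp (ENNReal.measurable_ofReal.pow_const p)
        ENNReal.measurable_ofReal
      have heq : ((fun x : ℝ => (ENNReal.ofReal x) ^ p) ∘
          (∑ m ∈ (Finset.range N).erase n, Y m)) = fun ω => (T ω) ^ p := by
        funext ω
        simp only [Function.comp_apply, Finset.sum_apply, hTdef]
        rw [ENNReal.ofReal_sum_of_nonneg (fun m _ => hpos m ω)]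
      rw [← heq]
      exact h
    have hmul : ∫⁻ ω, Z n ω * (T ω) ^ p ∂P
        = (∫⁻ ω, Z n ω ∂P) * ∫⁻ ω, (T ω) ^ p ∂P :=
      lintegral_mul_eq_lintegral_mul_lintegral_of_indepFun'' (hZ n).aemeasurable
        ((hTmeas.pow_const p).aemeasurable) hind2.symm
    have hT_le : ∫⁻ ω, (T ω) ^ p ∂P ≤ ∫⁻ ω, (∑' m, Z m ω) ^ p ∂P :=
      lintegral_mono fun ω => pow_le_pow_left' (ENNReal.sum_le_tsum _) p
    calc ∫⁻ ω, Z n ω * (S N ω) ^ p ∂P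
        ≤ ∫⁻ ω, 2 ^ (p - 1) * (Z n ω ^ (p + 1) + Z n ω * T ω ^ p) ∂P :=
          lintegral_mono hpt
      _ = 2 ^ (p - 1) * ((∫⁻ ω, Z n ω ^ (p + 1) ∂P) + ∫⁻ ω, Z n ω * T ω ^ p ∂P) := by
          rw [lintegral_const_mul (f := fun ω => Z n ω ^ (p + 1) + Z n ω * T ω ^ p) _ (((hZ n).pow_const (p + 1)).add
            ((hZ n).mul (hTmeas.pow_const p))),
            lintegral_add_left ((hZ n).pow_const (p + 1))]
      _ = 2 ^ (p - 1) * ((∫⁻ ω, Z n ω ^ (p + 1) ∂P)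
            + (∫⁻ ω, Z n ω ∂P) * ∫⁻ ω, (T ω) ^ p ∂P) := by rw [hmul]
      _ ≤ 2 ^ (p - 1) * ((∫⁻ ω, Z n ω ^ (p + 1) ∂P)
            + (∫⁻ ω, Z n ω ∂P) * ∫⁻ ω, (∑' m, Z m ω) ^ p ∂P) := by gcongr
  calc ∫⁻ ω, (S N ω) ^ (p + 1) ∂P
      = ∫⁻ ω, ∑ n ∈ Finset.range N, Z n ω * (S N ω) ^ p ∂P := by
        refine lintegral_congr fun ω => ?_
        rw [pow_succ', hSdef]
        exact Finset.sum_mul _ _ _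
    _ = ∑ n ∈ Finset.range N, ∫⁻ ω, Z n ω * (S N ω) ^ p ∂P :=
        lintegral_finset_sum _ (fun n _ => (hZ n).mul ((hSmeas N).pow_const p))
    _ ≤ ∑ n ∈ Finset.range N, 2 ^ (p - 1) * ((∫⁻ ω, Z n ω ^ (p + 1) ∂P)
            + (∫⁻ ω, Z n ω ∂P) * ∫⁻ ω, (∑' m, Z m ω) ^ p ∂P) :=
        Finset.sum_le_sum hNbound
    _ = 2 ^ (p - 1) * (∑ n ∈ Finset.range N, ∫⁻ ω, Z n ω ^ (p + 1) ∂P)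
          + 2 ^ (p - 1) * (∑ n ∈ Finset.range N, ∫⁻ ω, Z n ω ∂P)
            * ∫⁻ ω, (∑' m, Z m ω) ^ p ∂P := by
        rw [← Finset.mul_sum, Finset.sum_add_distrib, ← Finset.sum_mul, mul_add, mul_assoc]
    _ ≤ 2 ^ (p - 1) * (∑' n, ∫⁻ ω, Z n ω ^ (p + 1) ∂P)
          + 2 ^ (p - 1) * (∑' n, ∫⁻ ω, Z n ω ∂P)
            * ∫⁻ ω, (∑' m, Z m ω) ^ p ∂P := by
        gcongr <;> exact ENNReal.sum_le_tsum _

/-- for independent non-negative random variables `Y_n`, with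
`𝔖 := Σ Y_n` and `M_k := Σ E[Y_n^k]`, one has, for every integer `q ≥ 2`,
`E[𝔖^q] ≤ λ_{q,q-1} M_1^q + Σ_{k=0}^{q-2} λ_{q,k} M_{q-k} M_1^k`
(all quantities computed in `ℝ≥0∞`, so the inequality holds trivially when
some quantity is infinite). -/
theorem indep_sum_moment_bound
    {Ω : Type*} [MeasurableSpace Ω] (P : Measure Ω) [IsProbabilityMeasure P]
    (Y : ℕ → Ω → ℝ) (hmeas : ∀ n, Measurable (Y n)) (hpos : ∀ n ω, 0 ≤ Y n ω)
    (hindep : iIndepFun Y P)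
    (q : ℕ) (hq : 2 ≤ q) :
    ∫⁻ ω, (∑' n, ENNReal.ofReal (Y n ω)) ^ q ∂P
      ≤ ENNReal.ofReal (lamST q (q - 1))
            * (∑' n, ∫⁻ ω, ENNReal.ofReal (Y n ω) ∂P) ^ q
        + ∑ k ∈ Finset.range (q - 1),
            ENNReal.ofReal (lamST q k)
              * (∑' n, ∫⁻ ω, ENNReal.ofReal (Y n ω) ^ (q - k) ∂P)
              * (∑' n, ∫⁻ ω, ENNReal.ofReal (Y n ω) ∂P) ^ k := by
  set Z : ℕ → Ω → ℝ≥0∞ := fun n ω => ENNReal.ofReal (Y n ω) with hZdef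
  have hZ : ∀ n, Measurable (Z n) := fun n => ENNReal.measurable_ofReal.comp (hmeas n)
  set M : ℕ → ℝ≥0∞ := fun k => ∑' n, ∫⁻ ω, Z n ω ^ k ∂P with hMdef
  set A : ℕ → ℝ≥0∞ := fun r => ∫⁻ ω, (∑' n, Z n ω) ^ r ∂P with hAdef
  set M1 : ℝ≥0∞ := ∑' n, ∫⁻ ω, Z n ω ∂P with hM1def
  have hM1 : M 1 = M1 := by simp [hMdef, hM1def]
  have hA1 : A 1 ≤ M1 := by
    rw [hAdef, hM1def]
    simp only [pow_one]
    rw [lintegral_tsum (fun n => (hZ n).aemeasurable)]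
  have hkey : ∀ p : ℕ, A (p + 1) ≤ 2 ^ (p - 1) * M (p + 1) + 2 ^ (p - 1) * M1 * A p :=
    fun p => key_step P Y hmeas hpos hindep p
  have h2pow : ∀ m : ℕ, ENNReal.ofReal ((2:ℝ) ^ m) = 2 ^ m := by
    intro m
    rw [ENNReal.ofReal_pow (by norm_num : (0:ℝ) ≤ 2)]
    norm_num
  -- main induction
  suffices H : ∀ r : ℕ, 2 ≤ r →
      A r ≤ ENNReal.ofReal (lamST r (r - 1)) * M1 ^ r
        + ∑ k ∈ Finset.range (r - 1), ENNReal.ofReal (lamST r k) * M (r - k) * M1 ^ k by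
    exact H q hq
  intro r hr
  induction r, hr using Nat.le_induction with
  | base =>
      have h21 : lamST 2 1 = 1 := by
        rw [lamST_succ_succ, lamST_zero]; norm_num
      have h20 : lamST 2 0 = 1 := by rw [lamST_zero]; norm_num
      have : A 2 ≤ 2 ^ (1 - 1) * M 2 + 2 ^ (1 - 1) * M1 * A 1 := hkey 1
      norm_num at this
      calc A 2 ≤ M 2 + M1 * A 1 := this
        _ ≤ M 2 + M1 * M1 := by gcongr
        _ = ENNReal.ofReal (lamST 2 (2 - 1)) * M1 ^ 2
            + ∑ k ∈ Finset.range (2 - 1), ENNReal.ofReal (lamST 2 k) * M (2 - k) * M1 ^ k := by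
          simp [h21, h20, Finset.sum_range_one, sq]
          ring
  | succ r hr IH =>
      obtain ⟨u, rfl⟩ : ∃ u, r = u + 2 := ⟨r - 2, by omega⟩
      -- r = u + 2, target exponent u + 3
      have harith1 : u + 2 - 1 = u + 1 := by omega
      have harith2 : u + 3 - 1 = u + 2 := by omega
      rw [harith1] at IH
      calc A (u + 3)
          ≤ 2 ^ (u + 2 - 1) * M (u + 3) + 2 ^ (u + 2 - 1) * M1 * A (u + 2) := hkey (u + 2)
        _ ≤ 2 ^ (u + 1) * M (u + 3) + 2 ^ (u + 1) * M1 *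
              (ENNReal.ofReal (lamST (u + 2) (u + 1)) * M1 ^ (u + 2)
                + ∑ k ∈ Finset.range (u + 1),
                    ENNReal.ofReal (lamST (u + 2) k) * M (u + 2 - k) * M1 ^ k) := by
            rw [harith1]; gcongr
        _ = ENNReal.ofReal (lamST (u + 3) (u + 3 - 1)) * M1 ^ (u + 3)
            + ∑ k ∈ Finset.range (u + 3 - 1),
                ENNReal.ofReal (lamST (u + 3) k) * M (u + 3 - k) * M1 ^ k := by
            rw [harith2]
            have hc1 : ENNReal.ofReal (lamST (u + 3) (u + 2))
                = 2 ^ (u + 1) * ENNReal.ofReal (lamST (u + 2) (u + 1)) := by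
              rw [lamST_succ_succ, ENNReal.ofReal_mul (by positivity), h2pow, harith1]
            have hc0 : ENNReal.ofReal (lamST (u + 3) 0) = 2 ^ (u + 1) := by
              rw [lamST_zero]
              have : u + 3 - 2 = u + 1 := by omega
              rw [this, h2pow]
            have hck : ∀ k, ENNReal.ofReal (lamST (u + 3) (k + 1))
                = 2 ^ (u + 1) * ENNReal.ofReal (lamST (u + 2) k) := by
              intro k
              rw [lamST_succ_succ, ENNReal.ofReal_mul (by positivity), h2pow, harith1]
            have hswap : ∑ k ∈ Finset.range (u + 1),
                ENNReal.ofReal (lamST (u + 3) (k + 1)) * M (u + 3 - (k + 1)) * M1 ^ (k + 1)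
                = 2 ^ (u + 1) * M1 * ∑ k ∈ Finset.range (u + 1),
                    ENNReal.ofReal (lamST (u + 2) k) * M (u + 2 - k) * M1 ^ k := by
              rw [Finset.mul_sum]
              refine Finset.sum_congr rfl fun k hk => ?_
              rw [hck k]
              have h3 : u + 3 - (k + 1) = u + 2 - k := by omega
              rw [h3]
              ring
            rw [Finset.sum_range_succ'
              (fun k => ENNReal.ofReal (lamST (u + 3) k) * M (u + 3 - k) * M1 ^ k) (u + 1)]
            rw [hswap, hc1, hc0, Nat.sub_zero, pow_zero, mul_one]
            ring
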